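/- arXiv:2102.03575 — 2 statements merged into one kernel-verified Lean document; each statement's English description precedes it below -/
import Mathlib

section
/- Let {I₁, J₁} and {I₂, J₂} be cuts of N that do not fulfill Keel's quadratic relation and are distinct. Then exactly one of the following holds: I₁ ⊊ I₂, I₁ ⊊ J₂, J₁ ⊊ I₂, or J₁ ⊊ J₂; moreover in each case the complementary containment also holds (e.g., I₁ ⊊ I₂ implies J₂ ⊊ J₁). -/
namespace NestedCutsAux

variable {α : Type*} [DecidableEq α]

/-- In a disjoint cover, the second part is the complement of the first. -/
lemma part_eq_sdiff {N A B : Finset α} (hu : A ∪ B = N) (hd : Disjoint A B) :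
    B = N \ A := by
  subst hu
  rw [Finset.union_sdiff_cancel_left hd]

/-- Complementary strict containment. -/
lemma compl_ssubset {N A B C D : Finset α}
    (hAB : A ∪ B = N) (hdAB : Disjoint A B)
    (hCD : C ∪ D = N) (hdCD : Disjoint C D)
    (h : A ⊂ C) : D ⊂ B := by
  have hB : B = N \ A := part_eq_sdiff hAB hdAB
  have hD : D = N \ C := part_eq_sdiff hCD hdCD
  have hsub : D ⊆ B := by
    rw [hB, hD]
    exact Finset.sdiff_subset_sdiff (le_refl N) h.subset
  refine ⟨hsub, fun hBD => h.ne ?_⟩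
  have hA : A = N \ B := part_eq_sdiff (by rw [Finset.union_comm]; exact hAB) hdAB.symm
  have hC : C = N \ D := part_eq_sdiff (by rw [Finset.union_comm]; exact hCD) hdCD.symm
  rw [hA, hC, le_antisymm hBD hsub]

/-- A nonempty set cannot be inside both parts of a disjoint pair. -/
lemma not_both {A C D : Finset α} (hA : A.Nonempty) (hd : Disjoint C D)
    (h1 : A ⊆ C) (h2 : A ⊆ D) : False := by
  obtain ⟨x, hx⟩ := hA
  exact hd.forall_ne_finset (h1 hx) (h2 hx) rfl

/-- Both parts of a cover cannot lie in one part of a disjoint cover with nonempty other part. -/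
lemma not_cover {N A B C D : Finset α} (hAB : A ∪ B = N) (hCD : C ∪ D = N)
    (hd : Disjoint C D) (hD : D.Nonempty) (h1 : A ⊆ C) (h2 : B ⊆ C) : False := by
  have hDC : D ⊆ C := by
    intro x hx
    have hxN : x ∈ N := hCD ▸ Finset.mem_union_right C hx
    rcases Finset.mem_union.1 (hAB ▸ hxN) with h | h
    · exact h1 h
    · exact h2 h
  exact not_both hD hd hDC (le_refl D)

/-- Empty intersection forces containment in the other part. -/
lemma subset_of_empty_inter {N A C D : Finset α} (hAN : A ⊆ N) (hCD : C ∪ D = N)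
    (h : ¬(A ∩ C).Nonempty) : A ⊆ D := by
  intro x hx
  rcases Finset.mem_union.1 (hCD ▸ hAN hx) with hc | hd
  · exact absurd ⟨x, Finset.mem_inter.2 ⟨hx, hc⟩⟩ h
  · exact hd

end NestedCutsAux

open NestedCutsAux in
/-- Two distinct cuts of `N` not fulfilling Keel's quadratic relation satisfy exactly one
of the strict containments `I₁ ⊊ I₂`, `I₁ ⊊ J₂`, `J₁ ⊊ I₂`, `J₁ ⊊ J₂`, and in each case
the complementary containment also holds. -/
theorem nested_cuts_exactly_one_containment {α : Type*} [DecidableEq α]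
    (N I₁ J₁ I₂ J₂ : Finset α)
    (h1u : I₁ ∪ J₁ = N) (h1d : Disjoint I₁ J₁) (h1I : 2 ≤ I₁.card) (h1J : 2 ≤ J₁.card)
    (h2u : I₂ ∪ J₂ = N) (h2d : Disjoint I₂ J₂) (h2I : 2 ≤ I₂.card) (h2J : 2 ≤ J₂.card)
    (hnk : ¬((I₁ ∩ I₂).Nonempty ∧ (I₁ ∩ J₂).Nonempty ∧ (J₁ ∩ I₂).Nonempty ∧ (J₁ ∩ J₂).Nonempty))
    (hdist : ¬(I₁ = I₂ ∧ J₁ = J₂) ∧ ¬(I₁ = J₂ ∧ J₁ = I₂)) :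
    ((I₁ ⊂ I₂ ∧ ¬I₁ ⊂ J₂ ∧ ¬J₁ ⊂ I₂ ∧ ¬J₁ ⊂ J₂) ∨
     (¬I₁ ⊂ I₂ ∧ I₁ ⊂ J₂ ∧ ¬J₁ ⊂ I₂ ∧ ¬J₁ ⊂ J₂) ∨
     (¬I₁ ⊂ I₂ ∧ ¬I₁ ⊂ J₂ ∧ J₁ ⊂ I₂ ∧ ¬J₁ ⊂ J₂) ∨
     (¬I₁ ⊂ I₂ ∧ ¬I₁ ⊂ J₂ ∧ ¬J₁ ⊂ I₂ ∧ J₁ ⊂ J₂)) ∧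
    (I₁ ⊂ I₂ → J₂ ⊂ J₁) ∧ (I₁ ⊂ J₂ → I₂ ⊂ J₁) ∧
    (J₁ ⊂ I₂ → J₂ ⊂ I₁) ∧ (J₁ ⊂ J₂ → I₂ ⊂ I₁) := by
  have hI₁ : I₁.Nonempty := Finset.card_pos.1 (by omega)
  have hJ₁ : J₁.Nonempty := Finset.card_pos.1 (by omega)
  have hI₂ : I₂.Nonempty := Finset.card_pos.1 (by omega)
  have hJ₂ : J₂.Nonempty := Finset.card_pos.1 (by omega)
  have h1u' : J₁ ∪ I₁ = N := by rw [Finset.union_comm]; exact h1u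
  have h2u' : J₂ ∪ I₂ = N := by rw [Finset.union_comm]; exact h2u
  -- complementary implications
  have imp1 : I₁ ⊂ I₂ → J₂ ⊂ J₁ := fun h => compl_ssubset h1u h1d h2u h2d h
  have imp2 : I₁ ⊂ J₂ → I₂ ⊂ J₁ := fun h => compl_ssubset h1u h1d h2u' h2d.symm h
  have imp3 : J₁ ⊂ I₂ → J₂ ⊂ I₁ := fun h => compl_ssubset h1u' h1d.symm h2u h2d h
  have imp4 : J₁ ⊂ J₂ → I₂ ⊂ I₁ := fun h => compl_ssubset h1u' h1d.symm h2u' h2d.symm h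
  -- pairwise exclusions
  have e12 : I₁ ⊂ I₂ → I₁ ⊂ J₂ → False := fun a b => not_both hI₁ h2d a.subset b.subset
  have e34 : J₁ ⊂ I₂ → J₁ ⊂ J₂ → False := fun a b => not_both hJ₁ h2d a.subset b.subset
  have e13 : I₁ ⊂ I₂ → J₁ ⊂ I₂ → False :=
    fun a b => not_cover h1u h2u h2d hJ₂ a.subset b.subset
  have e24 : I₁ ⊂ J₂ → J₁ ⊂ J₂ → False :=
    fun a b => not_cover h1u h2u' h2d.symm hI₂ a.subset b.subset
  have e14 : I₁ ⊂ I₂ → J₁ ⊂ J₂ → False := fun a b => ssubset_irrefl J₁ (b.trans (imp1 a))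
  have e23 : I₁ ⊂ J₂ → J₁ ⊂ I₂ → False := fun a b => ssubset_irrefl J₁ (b.trans (imp2 a))
  -- at least one containment
  have hI₁N : I₁ ⊆ N := h1u ▸ Finset.subset_union_left
  have hJ₁N : J₁ ⊆ N := h1u ▸ Finset.subset_union_right
  have hcompl_eq : ∀ {A B C D : Finset α}, A ∪ B = N → Disjoint A B → C ∪ D = N →
      Disjoint C D → A = C → B = D := by
    intro A B C D hu hd hu' hd' h
    rw [part_eq_sdiff hu hd, part_eq_sdiff hu' hd', h]
  have hex : I₁ ⊂ I₂ ∨ I₁ ⊂ J₂ ∨ J₁ ⊂ I₂ ∨ J₁ ⊂ J₂ := by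
    push_neg at hnk
    by_cases k1 : (I₁ ∩ I₂).Nonempty
    · by_cases k2 : (I₁ ∩ J₂).Nonempty
      · by_cases k3 : (J₁ ∩ I₂).Nonempty
        · -- J₁ ∩ J₂ empty : J₁ ⊆ I₂
          have hs : J₁ ⊆ I₂ := subset_of_empty_inter hJ₁N h2u' (Finset.not_nonempty_iff_eq_empty.2 (hnk k1 k2 k3))
          refine Or.inr (Or.inr (Or.inl ⟨hs, fun hle => ?_⟩))
          exact hdist.2 ⟨hcompl_eq h1u' h1d.symm h2u h2d (le_antisymm hs hle), le_antisymm hs hle⟩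
        · -- J₁ ∩ I₂ empty : J₁ ⊆ J₂
          have hs : J₁ ⊆ J₂ := subset_of_empty_inter hJ₁N h2u k3
          refine Or.inr (Or.inr (Or.inr ⟨hs, fun hle => ?_⟩))
          exact hdist.1 ⟨hcompl_eq h1u' h1d.symm h2u' h2d.symm (le_antisymm hs hle),
            le_antisymm hs hle⟩
      · -- I₁ ∩ J₂ empty : I₁ ⊆ I₂
        have hs : I₁ ⊆ I₂ := subset_of_empty_inter hI₁N h2u' k2
        refine Or.inl ⟨hs, fun hle => ?_⟩
        exact hdist.1 ⟨le_antisymm hs hle,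
          hcompl_eq h1u h1d h2u h2d (le_antisymm hs hle)⟩
    · -- I₁ ∩ I₂ empty : I₁ ⊆ J₂
      have hs : I₁ ⊆ J₂ := subset_of_empty_inter hI₁N h2u k1
      refine Or.inr (Or.inl ⟨hs, fun hle => ?_⟩)
      exact hdist.2 ⟨le_antisymm hs hle,
        hcompl_eq h1u h1d h2u' h2d.symm (le_antisymm hs hle)⟩
  refine ⟨?_, imp1, imp2, imp3, imp4⟩
  rcases hex with h | h | h | h
  · exact Or.inl ⟨h, fun b => e12 h b, fun b => e13 h b, fun b => e14 h b⟩
  · exact Or.inr (Or.inl ⟨fun a => e12 a h, h, fun b => e23 h b, fun b => e24 h b⟩)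
  · exact Or.inr (Or.inr (Or.inl ⟨fun a => e13 a h, fun a => e23 a h, h, fun b => e34 h b⟩))
  · exact Or.inr (Or.inr (Or.inr ⟨fun a => e14 a h, fun a => e24 a h, fun a => e34 a h, h⟩))
end

section
/- Define the value of a finite vertex-weighted rooted tree (weights in ℕ) recursively: the value of the empty tree is 1; the value of a single vertex of weight 0 is 1 and of positive weight is 0; otherwise pick a leaf l with parent l₁: if w(l) > w(l₁) the value is 0, else the value is C(w(l₁), w(l)) times the value of the tree obtained by deleting l and replacing w(l₁) by w(l₁) − w(l). Then this value is well defined, i.e., independent of the choice of leaf at each step. -/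
/-- The recursive leaf-elimination evaluation of a vertex-weighted forest: `RVal G s w z`
means that the value of the weighted forest induced on `s` (with weights `w`) can be
computed to be `z` by some sequence of leaf eliminations. The empty forest has value 1;
removing an isolated vertex `v` multiplies by 1 if `w v = 0` and by 0 otherwise;
removing a leaf `v` with unique neighbor `p` in `s` multiplies by `C(w p, w v)`
(which is 0 when `w v > w p`) and replaces `w p` by `w p − w v`. -/
inductive RVal {V : Type*} [DecidableEq V] (G : SimpleGraph V) :
    Finset V → (V → ℕ) → ℕ → Prop
  | empty (w : V → ℕ) : RVal G ∅ w 1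
  | isolated {s : Finset V} {w : V → ℕ} {z : ℕ} (v : V)
      (hv : v ∈ s) (hiso : ∀ u ∈ s, ¬G.Adj v u)
      (h : RVal G (s.erase v) w z) :
      RVal G s w ((if w v = 0 then 1 else 0) * z)
  | leaf {s : Finset V} {w : V → ℕ} {z : ℕ} (v p : V)
      (hv : v ∈ s) (hp : p ∈ s) (hadj : G.Adj v p)
      (huniq : ∀ u ∈ s, G.Adj v u → u = p)
      (h : RVal G (s.erase v) (Function.update w p (w p - w v)) z) :
      RVal G s w (Nat.choose (w p) (w v) * z)

lemma choose_sub_comm (c a b : ℕ) : c.choose a * (c - a).choose b = c.choose b * (c - b).choose a := by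
  rcases le_or_gt (a + b) c with h | h
  · have h1 := Nat.choose_mul (n := c) (k := a + b) (s := a) (Nat.le_add_right a b)
    have h2 := Nat.choose_mul (n := c) (k := a + b) (s := b) (Nat.le_add_left b a)
    simp only [Nat.add_sub_cancel_left, Nat.add_sub_cancel] at h1 h2
    rw [← h1, ← h2, Nat.choose_symm_add]
  · have h1 : c.choose a * (c - a).choose b = 0 := by
      rcases le_or_gt a c with ha | ha
      · rw [Nat.choose_eq_zero_of_lt (show c - a < b by omega)]; ring
      · rw [Nat.choose_eq_zero_of_lt ha]; ring
    have h2 : c.choose b * (c - b).choose a = 0 := by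
      rcases le_or_gt b c with hb | hb
      · rw [Nat.choose_eq_zero_of_lt (show c - b < a by omega)]; ring
      · rw [Nat.choose_eq_zero_of_lt hb]; ring
    rw [h1, h2]

lemma choose_ind_comm (a b : ℕ) :
    a.choose b * (if a - b = 0 then 1 else 0) = b.choose a * (if b - a = 0 then 1 else 0) := by
  rcases lt_trichotomy a b with h | rfl | h
  · simp [Nat.choose_eq_zero_of_lt h, show b - a ≠ 0 by omega]
  · simp
  · simp [Nat.choose_eq_zero_of_lt h, show a - b ≠ 0 by omega]

lemma rval_congr {V : Type*} [DecidableEq V] {G : SimpleGraph V} {s : Finset V}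
    {w w' : V → ℕ} {z : ℕ} (h : RVal G s w z) (hw : ∀ x ∈ s, w x = w' x) :
    RVal G s w' z := by
  induction h generalizing w' with
  | empty w => exact RVal.empty w'
  | isolated v hv hiso h ih =>
    rw [hw v hv]
    exact RVal.isolated v hv hiso (ih fun x hx => hw x (Finset.mem_of_mem_erase hx))
  | leaf v p hv hp hadj huniq h ih =>
    rw [hw p hp, hw v hv]
    refine RVal.leaf v p hv hp hadj huniq (ih ?_)
    intro x hx
    rcases eq_or_ne x p with rfl | hxp
    · simp [hw x hp, hw v hv]
    · simp [Function.update_of_ne hxp, hw x (Finset.mem_of_mem_erase hx)]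

/-- The exchange lemma: if a forest evaluates to `z` and `v` is removable (isolated or
a leaf), then `z` equals the multiplier of `v` times some value of the reduced forest. -/
lemma rval_exchange {V : Type*} [DecidableEq V] {G : SimpleGraph V} :
    ∀ (n : ℕ) (s : Finset V), s.card ≤ n → ∀ (w : V → ℕ) (z : ℕ) (v : V),
      RVal G s w z → v ∈ s →
      ((∀ u ∈ s, ¬G.Adj v u) →
        ∃ z', RVal G (s.erase v) w z' ∧ z = (if w v = 0 then 1 else 0) * z') ∧
      (∀ p ∈ s, G.Adj v p → (∀ u ∈ s, G.Adj v u → u = p) →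
        ∃ z', RVal G (s.erase v) (Function.update w p (w p - w v)) z' ∧
          z = Nat.choose (w p) (w v) * z') := by
  intro n
  induction n with
  | zero =>
    intro s hcard w z v _ hv
    rw [Nat.le_zero, Finset.card_eq_zero] at hcard
    subst hcard; exact absurd hv (by simp)
  | succ n IH =>
    intro s hcard w z v h hv
    have hcard' : (s.erase v).card ≤ n := by
      have := Finset.card_erase_of_mem hv; omega
    cases h with
    | empty _ => exact absurd hv (by simp)
    | isolated u hu hiso hsub =>
      rename_i z₁
      have hcu : (s.erase u).card ≤ n := by
        have := Finset.card_erase_of_mem hu; omega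
      constructor
      · -- v is isolated in s
        intro hviso
        rcases eq_or_ne u v with rfl | huv
        · exact ⟨z₁, hsub, rfl⟩
        · have hv' : v ∈ s.erase u := Finset.mem_erase.2 ⟨fun hvu => huv hvu.symm, hv⟩
          obtain ⟨z₂, hz₂, hzeq⟩ := (IH (s.erase u) hcu w z₁ v hsub hv').1
            (fun x hx => hviso x (Finset.mem_of_mem_erase hx))
          refine ⟨(if w u = 0 then 1 else 0) * z₂, ?_, by rw [hzeq]; ring⟩
          refine RVal.isolated u (Finset.mem_erase.2 ⟨huv, hu⟩)
            (fun x hx => hiso x (Finset.mem_of_mem_erase hx)) ?_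
          rw [Finset.erase_right_comm]
          exact hz₂
      · -- v is a leaf in s with parent p
        intro p hp hadjv huniq_v
        rcases eq_or_ne u v with rfl | huv
        · exact absurd hadjv (hiso p hp)
        have hpu : p ≠ u := fun hh => hiso v hv (hh ▸ hadjv).symm
        have hv' : v ∈ s.erase u := Finset.mem_erase.2 ⟨fun hvu => huv hvu.symm, hv⟩
        obtain ⟨z₂, hz₂, hzeq⟩ := (IH (s.erase u) hcu w z₁ v hsub hv').2 p
          (Finset.mem_erase.2 ⟨hpu, hp⟩) hadjv
          (fun x hx hadjx => huniq_v x (Finset.mem_of_mem_erase hx) hadjx)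
        refine ⟨(if w u = 0 then 1 else 0) * z₂, ?_, by rw [hzeq]; ring⟩
        have hres : RVal G (s.erase v) (Function.update w p (w p - w v))
            ((if Function.update w p (w p - w v) u = 0 then 1 else 0) * z₂) := by
          refine RVal.isolated u (Finset.mem_erase.2 ⟨huv, hu⟩)
            (fun x hx => hiso x (Finset.mem_of_mem_erase hx)) ?_
          rw [Finset.erase_right_comm]
          exact hz₂
        rwa [Function.update_of_ne (fun h => hpu h.symm)] at hres
    | leaf u q hu hq hadj_u huniq_u hsub =>
      rename_i z₁
      have hcu : (s.erase u).card ≤ n := by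
        have := Finset.card_erase_of_mem hu; omega
      constructor
      · -- v is isolated in s
        intro hviso
        rcases eq_or_ne u v with rfl | huv
        · exact absurd hadj_u (hviso q hq)
        have hqv : q ≠ v := fun hh => hviso u hu (hh ▸ hadj_u).symm
        have hv' : v ∈ s.erase u := Finset.mem_erase.2 ⟨fun hvu => huv hvu.symm, hv⟩
        obtain ⟨z₂, hz₂, hzeq⟩ := (IH (s.erase u) hcu _ z₁ v hsub hv').1
          (fun x hx => hviso x (Finset.mem_of_mem_erase hx))
        rw [Function.update_of_ne (fun h => hqv h.symm)] at hzeq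
        refine ⟨Nat.choose (w q) (w u) * z₂, ?_, by rw [hzeq]; ring⟩
        refine RVal.leaf u q (Finset.mem_erase.2 ⟨huv, hu⟩)
          (Finset.mem_erase.2 ⟨hqv, hq⟩) hadj_u
          (fun x hx hadjx => huniq_u x (Finset.mem_of_mem_erase hx) hadjx) ?_
        rw [Finset.erase_right_comm]
        exact hz₂
      · -- v is a leaf in s with parent p
        intro p hp hadjv huniq_v
        rcases eq_or_ne u v with rfl | huv
        · have hqp : q = p := huniq_v q hq hadj_u
          subst hqp
          exact ⟨z₁, hsub, rfl⟩
        have hvu : v ≠ u := fun h => huv h.symm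
        have hv' : v ∈ s.erase u := Finset.mem_erase.2 ⟨hvu, hv⟩
        have hu' : u ∈ s.erase v := Finset.mem_erase.2 ⟨huv, hu⟩
        rcases eq_or_ne p u with rfl | hpu
        · -- mutual leaves: v's parent is u, and u's parent must be v
          have hqv : v = q := huniq_u v hv hadjv.symm
          subst hqv
          -- v is isolated in s.erase p
          have hviso' : ∀ x ∈ s.erase p, ¬G.Adj v x := fun x hx hadjx =>
            (Finset.mem_erase.1 hx).1 (huniq_v x (Finset.mem_of_mem_erase hx) hadjx)
          obtain ⟨z₂, hz₂, hzeq⟩ := (IH (s.erase p) hcu _ z₁ v hsub hv').1 hviso'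
          rw [Function.update_self] at hzeq
          have hpiso' : ∀ x ∈ s.erase v, ¬G.Adj p x := fun x hx hadjx =>
            (Finset.mem_erase.1 hx).1 (huniq_u x (Finset.mem_of_mem_erase hx) hadjx)
          have hz₂' : RVal G ((s.erase v).erase p) (Function.update w p (w p - w v)) z₂ := by
            rw [Finset.erase_right_comm]
            refine rval_congr hz₂ ?_
            intro x hx
            obtain ⟨hxv, hx'⟩ := Finset.mem_erase.1 hx
            obtain ⟨hxp, _⟩ := Finset.mem_erase.1 hx'
            rw [Function.update_of_ne hxv, Function.update_of_ne hxp]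
          refine ⟨(if w p - w v = 0 then 1 else 0) * z₂, ?_, ?_⟩
          · have hres := RVal.isolated (G := G) p hu' hpiso' hz₂'
            rwa [Function.update_self] at hres
          · rw [hzeq, ← mul_assoc, ← mul_assoc, choose_ind_comm]
        · -- generic case: p ≠ u, hence q ≠ v
          have hqv : q ≠ v := fun hh => hpu (huniq_v u hu (hh ▸ hadj_u).symm).symm
          have hp' : p ∈ s.erase u := Finset.mem_erase.2 ⟨hpu, hp⟩
          obtain ⟨z₂, hz₂, hzeq⟩ := (IH (s.erase u) hcu _ z₁ v hsub hv').2 p hp' hadjv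
            (fun x hx hadjx => huniq_v x (Finset.mem_of_mem_erase hx) hadjx)
          have hupv : Function.update w q (w q - w u) v = w v :=
            Function.update_of_ne (fun h => hqv h.symm) _ _
          have hq' : q ∈ s.erase v := Finset.mem_erase.2 ⟨hqv, hq⟩
          have hupu : Function.update w p (w p - w v) u = w u :=
            Function.update_of_ne (fun h => hpu h.symm) _ _
          rcases eq_or_ne p q with rfl | hpq
          · -- common parent
            rw [Function.update_self, hupv] at hzeq
            rw [Function.update_self, Function.update_of_ne hadjv.ne] at hz₂
            have hfun : Function.update (Function.update w p (w p - w u)) p (w p - w u - w v)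
                = Function.update (Function.update w p (w p - w v)) p (w p - w v - w u) := by
              rw [Function.update_idem, Function.update_idem, Nat.sub_right_comm]
            have hz₂' : RVal G ((s.erase v).erase u)
                (Function.update (Function.update w p (w p - w v)) p
                  (Function.update w p (w p - w v) p - Function.update w p (w p - w v) u)) z₂ := by
              rw [Finset.erase_right_comm, Function.update_self, hupu, ← hfun]
              exact hz₂
            refine ⟨Nat.choose (w p - w v) (w u) * z₂, ?_, ?_⟩
            · have hres := RVal.leaf (G := G) u p hu' hq' hadj_u
                (fun x hx hadjx => huniq_u x (Finset.mem_of_mem_erase hx) hadjx) hz₂'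
              rwa [Function.update_self, hupu] at hres
            · rw [hzeq, ← mul_assoc, ← mul_assoc, choose_sub_comm]
          · -- distinct parents
            rw [Function.update_of_ne hpq, hupv] at hzeq
            rw [Function.update_of_ne hpq, Function.update_of_ne hqv.symm] at hz₂
            have hfun : Function.update (Function.update w q (w q - w u)) p (w p - w v)
                = Function.update (Function.update w p (w p - w v)) q (w q - w u) :=
              Function.update_comm hpq.symm _ _ _
            have hz₂' : RVal G ((s.erase v).erase u)
                (Function.update (Function.update w p (w p - w v)) q
                  (Function.update w p (w p - w v) q - Function.update w p (w p - w v) u)) z₂ := by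
              rw [Finset.erase_right_comm, Function.update_of_ne hpq.symm, hupu, ← hfun]
              exact hz₂
            refine ⟨Nat.choose (w q) (w u) * z₂, ?_, ?_⟩
            · have hres := RVal.leaf (G := G) u q hu' hq' hadj_u
                (fun x hx hadjx => huniq_u x (Finset.mem_of_mem_erase hx) hadjx) hz₂'
              rwa [Function.update_of_ne hpq.symm, hupu] at hres
            · rw [hzeq]; ring

/-- The recursively defined value of a vertex-weighted forest is well defined:
it does not depend on the order in which leaves are eliminated. -/
theorem rval_well_defined {V : Type*} [DecidableEq V] (G : SimpleGraph V)
    (hG : G.IsAcyclic) (s : Finset V) (w : V → ℕ) (z₁ z₂ : ℕ)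
    (h₁ : RVal G s w z₁) (h₂ : RVal G s w z₂) : z₁ = z₂ := by
  clear hG
  induction h₁ generalizing z₂ with
  | empty w =>
    cases h₂ with
    | empty _ => rfl
    | isolated v hv _ _ => exact absurd hv (by simp)
    | leaf v p hv _ _ _ _ => exact absurd hv (by simp)
  | isolated v hv hiso hsub ih =>
    obtain ⟨z₂', hz₂', hzeq⟩ := (rval_exchange _ _ le_rfl _ _ v h₂ hv).1 hiso
    rw [hzeq, ih _ hz₂']
  | leaf v p hv hp hadj huniq hsub ih =>
    obtain ⟨z₂', hz₂', hzeq⟩ := (rval_exchange _ _ le_rfl _ _ v h₂ hv).2 p hp hadj huniq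
    rw [hzeq, ih _ hz₂']
end
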